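/- arXiv:2009.11105 — 3 statements merged into one kernel-verified Lean document; each statement's English description precedes it below -/
import Mathlib

section
/- Let n ≥ 1, let Ω ⊆ ℝⁿ be an open set, let e : ℝⁿ → ℝⁿ be continuously differentiable with operator norm ‖De(q)‖ ≤ 1/2 for all q ∈ Ω, and for θ ∈ [0,1] define Y_θ : ℝⁿ → ℝⁿ by Y_θ(q) = q + θ e(q). Fix θ ∈ [0,1], assume Y_θ is injective on Ω, let wᶿ : ℝⁿ → ℝ be differentiable at every point of Y_θ(Ω), and let 1 ≤ p < ∞. Then ∫_{Y_θ(Ω)} ‖∇wᶿ(y)‖^p dy ≤ 2^p (3/2)ⁿ ∫_Ω ‖∇(wᶿ∘Y_θ)(q)‖^p dq, where the integrals are with respect to Lebesgue measure. -/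
open MeasureTheory Metric

section Aux

local notation "E" n => EuclideanSpace ℝ (Fin n)

lemma absdet_le_pow {n : ℕ} (A : (E n) →L[ℝ] (E n)) :
    |A.det| ≤ ‖A‖ ^ n := by
  set μ : Measure (E n) := volume
  have hK : μ (Metric.closedBall (0 : E n) 1) ≠ 0 :=
    (measure_closedBall_pos μ _ one_pos).ne'
  have hK' : μ (Metric.closedBall (0 : E n) 1) ≠ ⊤ :=
    measure_closedBall_lt_top.ne
  have himg : A '' Metric.closedBall 0 1 ⊆ Metric.closedBall 0 ‖A‖ := by
    rintro y ⟨x, hx, rfl⟩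
    simp only [Metric.mem_closedBall, dist_zero_right] at hx ⊢
    calc ‖A x‖ ≤ ‖A‖ * ‖x‖ := A.le_opNorm x
    _ ≤ ‖A‖ * 1 := by gcongr
    _ = ‖A‖ := mul_one _
  have h1 : μ (A '' Metric.closedBall 0 1)
      = ENNReal.ofReal |A.det| * μ (Metric.closedBall 0 1) := by
    simpa using μ.addHaar_image_continuousLinearMap A (Metric.closedBall 0 1)
  have h2 : μ (Metric.closedBall (0 : E n) ‖A‖)
      = ENNReal.ofReal (‖A‖ ^ n) * μ (Metric.closedBall 0 1) := by
    have h := μ.addHaar_closedBall' (0 : E n) (norm_nonneg A)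
    rwa [finrank_euclideanSpace, Fintype.card_fin] at h
  have hmono := measure_mono (μ := μ) himg
  rw [h1, h2] at hmono
  have h3 : ENNReal.ofReal |A.det| ≤ ENNReal.ofReal (‖A‖ ^ n) :=
    (ENNReal.mul_le_mul_iff_left hK hK').mp hmono
  rw [ENNReal.ofReal_le_ofReal_iff (by positivity)] at h3
  exact (abs_abs A.det ▸ h3)

lemma aux_unit {n : ℕ} (t : (E n) →L[ℝ] (E n)) (ht : ‖t‖ ≤ 1/2) :
    ∃ C : (E n) →L[ℝ] (E n),
      (1 + t) * C = 1 ∧ C * (1 + t) = 1 ∧ ‖C‖ ≤ 2 ∧ ‖1 + t‖ ≤ 3/2 ∧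
      |(1 + t).det| ≤ (3/2 : ℝ) ^ n ∧ ((1:ℝ)/2) ^ n ≤ |(1 + t).det| := by
  have hlt : ‖-t‖ < 1 := by rw [norm_neg]; linarith
  set u := Units.oneSub (-t) hlt with hu
  have huval : (u : (E n) →L[ℝ] (E n)) = 1 + t := by
    simp [hu, Units.oneSub, sub_neg_eq_add]
  set C : (E n) →L[ℝ] (E n) := ↑u⁻¹ with hC
  have hmul : (1 + t) * C = 1 := by rw [← huval]; exact u.mul_inv
  have hinvmul : C * (1 + t) = 1 := by rw [← huval]; exact u.inv_mul
  have hnorm1 : ‖(1 : (E n) →L[ℝ] (E n))‖ ≤ 1 := by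
    rw [ContinuousLinearMap.one_def]; exact ContinuousLinearMap.norm_id_le
  have hCnorm : ‖C‖ ≤ 2 := by
    have h1 : C * (1 + t) = 1 := hinvmul
    have h2 : C = 1 - C * t := by
      rw [mul_add, mul_one] at h1
      exact eq_sub_of_add_eq h1
    have h3 : ‖C‖ ≤ 1 + ‖C‖ * (1/2) := by
      calc ‖C‖ = ‖1 - C * t‖ := by rw [← h2]
      _ ≤ ‖(1 : (E n) →L[ℝ] (E n))‖ + ‖C * t‖ := norm_sub_le _ _
      _ ≤ 1 + ‖C‖ * (1/2) := by
          refine add_le_add hnorm1 ?_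
          exact (norm_mul_le _ _).trans (mul_le_mul_of_nonneg_left ht (norm_nonneg C))
    linarith
  have hBnorm : ‖1 + t‖ ≤ 3/2 := by
    calc ‖1 + t‖ ≤ ‖(1 : (E n) →L[ℝ] (E n))‖ + ‖t‖ := norm_add_le _ _
    _ ≤ 1 + 1/2 := add_le_add hnorm1 ht
    _ = 3/2 := by norm_num
  have hdet_mul : ((1 + t) * C).det = (1 + t).det * C.det := by
    show LinearMap.det _ = _
    rw [ContinuousLinearMap.mul_def, ContinuousLinearMap.toLinearMap_comp]
    exact LinearMap.det_comp _ _
  have hdet_one : (1 + t).det * C.det = 1 := by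
    rw [← hdet_mul, hmul]
    show LinearMap.det ((ContinuousLinearMap.id ℝ (E n)) : (E n) →ₗ[ℝ] (E n)) = 1
    rw [ContinuousLinearMap.coe_id, LinearMap.det_id]
  have hBup : |(1 + t).det| ≤ (3/2 : ℝ) ^ n := by
    calc |(1 + t).det| ≤ ‖1 + t‖ ^ n := absdet_le_pow _
    _ ≤ (3/2 : ℝ) ^ n := pow_le_pow_left₀ (norm_nonneg _) hBnorm n
  have hCup : |C.det| ≤ (2 : ℝ) ^ n := by
    calc |C.det| ≤ ‖C‖ ^ n := absdet_le_pow _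
    _ ≤ (2 : ℝ) ^ n := pow_le_pow_left₀ (norm_nonneg _) hCnorm n
  have habs1 : |(1 + t).det| * |C.det| = 1 := by
    rw [← abs_mul, hdet_one, abs_one]
  have hBlo : ((1:ℝ)/2) ^ n ≤ |(1 + t).det| := by
    have h2n : (0:ℝ) < 2 ^ n := by positivity
    rw [div_pow, one_pow, div_le_iff₀ h2n]
    calc (1:ℝ) = |(1 + t).det| * |C.det| := habs1.symm
    _ ≤ |(1 + t).det| * 2 ^ n := mul_le_mul_of_nonneg_left hCup (abs_nonneg _)
  exact ⟨C, hmul, hinvmul, hCnorm, hBnorm, hBup, hBlo⟩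

end Aux

/-- L^p gradient bound for a transported function: if ‖De‖ ≤ 1/2 on Ω and
Y_θ(q) = q + θe(q) is injective on Ω, then for 1 ≤ p < ∞,
∫_{Y_θ(Ω)} ‖∇wᶿ‖^p ≤ 2^p (3/2)ⁿ ∫_Ω ‖∇(wᶿ∘Y_θ)‖^p. -/
theorem stmt6 (n : ℕ) (hn : 1 ≤ n) (Ω : Set (EuclideanSpace ℝ (Fin n))) (hΩ : IsOpen Ω)
    (e : EuclideanSpace ℝ (Fin n) → EuclideanSpace ℝ (Fin n)) (he : ContDiff ℝ 1 e)
    (hbound : ∀ q ∈ Ω, ‖fderiv ℝ e q‖ ≤ 1 / 2)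
    (θ : ℝ) (hθ : θ ∈ Set.Icc (0:ℝ) 1)
    (hinj : Set.InjOn (fun q => q + θ • e q) Ω)
    (wθ : EuclideanSpace ℝ (Fin n) → ℝ)
    (hwθ : ∀ y ∈ (fun q => q + θ • e q) '' Ω, DifferentiableAt ℝ wθ y)
    (p : ℝ) (hp : 1 ≤ p) :
    ∫ y in (fun q => q + θ • e q) '' Ω, ‖fderiv ℝ wθ y‖ ^ p
      ≤ 2 ^ p * (3 / 2 : ℝ) ^ n
          * ∫ q in Ω, ‖fderiv ℝ (fun x => wθ (x + θ • e x)) q‖ ^ p := by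
  have hp0 : (0:ℝ) ≤ p := by linarith
  set B : EuclideanSpace ℝ (Fin n) →
      (EuclideanSpace ℝ (Fin n) →L[ℝ] EuclideanSpace ℝ (Fin n)) :=
    fun q => 1 + θ • fderiv ℝ e q with hB
  have hediff : Differentiable ℝ e := he.differentiable one_ne_zero
  have hder : ∀ q, HasFDerivAt (fun q => q + θ • e q) (B q) q := fun q => by
    have h1 : HasFDerivAt (fun x => θ • e x) (θ • fderiv ℝ e q) q :=
      (hediff q).hasFDerivAt.const_smul θ
    have h2 := (hasFDerivAt_id q).add h1
    rw [hB, ContinuousLinearMap.one_def]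
    exact h2
  have ht2 : ∀ q ∈ Ω, ‖θ • fderiv ℝ e q‖ ≤ 1/2 := fun q hq => by
    rw [norm_smul, Real.norm_eq_abs, abs_of_nonneg hθ.1]
    calc θ * ‖fderiv ℝ e q‖ ≤ 1 * (1/2) :=
      mul_le_mul hθ.2 (hbound q hq) (norm_nonneg _) one_pos.le
    _ = 1/2 := by norm_num
  -- notation for the two gradient-norm functions
  set F : EuclideanSpace ℝ (Fin n) → ℝ :=
    fun q => ‖fderiv ℝ (fun x => wθ (x + θ • e x)) q‖ ^ p with hF
  -- chain rule and pointwise bounds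
  have key : ∀ q ∈ Ω,
      |(B q).det| * ‖fderiv ℝ wθ (q + θ • e q)‖ ^ p ≤ 2 ^ p * (3/2 : ℝ) ^ n * F q ∧
      F q ≤ (3/2 : ℝ) ^ p * 2 ^ n *
        (|(B q).det| * ‖fderiv ℝ wθ (q + θ • e q)‖ ^ p) := by
    intro q hq
    obtain ⟨C, hmul, hinvmul, hCnorm, hBnorm, hBup, hBlo⟩ := aux_unit _ (ht2 q hq)
    have hw : DifferentiableAt ℝ wθ (q + θ • e q) := hwθ _ ⟨q, hq, rfl⟩
    have hcomp : fderiv ℝ (fun x => wθ (x + θ • e x)) q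
        = (fderiv ℝ wθ (q + θ • e q)).comp (B q) := by
      have h2 : HasFDerivAt (fun x => wθ (x + θ • e x))
          ((fderiv ℝ wθ (q + θ • e q)).comp (B q)) q :=
        hw.hasFDerivAt.comp q (hder q)
      exact h2.fderiv
    have hBC : (B q).comp C = ContinuousLinearMap.id ℝ _ := by
      rw [← ContinuousLinearMap.mul_def, hmul, ContinuousLinearMap.one_def]
    have hid : fderiv ℝ wθ (q + θ • e q)
        = (fderiv ℝ (fun x => wθ (x + θ • e x)) q).comp C := by
      rw [hcomp, ContinuousLinearMap.comp_assoc, hBC, ContinuousLinearMap.comp_id]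
    have hGle : ‖fderiv ℝ wθ (q + θ • e q)‖
        ≤ 2 * ‖fderiv ℝ (fun x => wθ (x + θ • e x)) q‖ := by
      rw [hid]
      calc ‖(fderiv ℝ (fun x => wθ (x + θ • e x)) q).comp C‖
          ≤ ‖fderiv ℝ (fun x => wθ (x + θ • e x)) q‖ * ‖C‖ :=
            ContinuousLinearMap.opNorm_comp_le _ _
      _ ≤ ‖fderiv ℝ (fun x => wθ (x + θ • e x)) q‖ * 2 :=
            mul_le_mul_of_nonneg_left hCnorm (norm_nonneg _)
      _ = 2 * ‖fderiv ℝ (fun x => wθ (x + θ • e x)) q‖ := mul_comm _ _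
    have hDle : ‖fderiv ℝ (fun x => wθ (x + θ • e x)) q‖
        ≤ (3/2) * ‖fderiv ℝ wθ (q + θ • e q)‖ := by
      rw [hcomp]
      calc ‖(fderiv ℝ wθ (q + θ • e q)).comp (B q)‖
          ≤ ‖fderiv ℝ wθ (q + θ • e q)‖ * ‖B q‖ :=
            ContinuousLinearMap.opNorm_comp_le _ _
      _ ≤ ‖fderiv ℝ wθ (q + θ • e q)‖ * (3/2) :=
            mul_le_mul_of_nonneg_left hBnorm (norm_nonneg _)
      _ = (3/2) * ‖fderiv ℝ wθ (q + θ • e q)‖ := mul_comm _ _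
    constructor
    · have h1 : ‖fderiv ℝ wθ (q + θ • e q)‖ ^ p
          ≤ 2 ^ p * ‖fderiv ℝ (fun x => wθ (x + θ • e x)) q‖ ^ p := by
        calc ‖fderiv ℝ wθ (q + θ • e q)‖ ^ p
            ≤ (2 * ‖fderiv ℝ (fun x => wθ (x + θ • e x)) q‖) ^ p :=
              Real.rpow_le_rpow (norm_nonneg _) hGle hp0
        _ = 2 ^ p * ‖fderiv ℝ (fun x => wθ (x + θ • e x)) q‖ ^ p :=
              Real.mul_rpow (by norm_num) (norm_nonneg _)
      calc |(B q).det| * ‖fderiv ℝ wθ (q + θ • e q)‖ ^ p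
          ≤ (3/2 : ℝ) ^ n *
            (2 ^ p * ‖fderiv ℝ (fun x => wθ (x + θ • e x)) q‖ ^ p) :=
            mul_le_mul hBup h1 (Real.rpow_nonneg (norm_nonneg _) p) (by positivity)
      _ = 2 ^ p * (3/2 : ℝ) ^ n * F q := by rw [hF]; ring
    · have h1 : F q ≤ (3/2 : ℝ) ^ p * ‖fderiv ℝ wθ (q + θ • e q)‖ ^ p := by
        rw [hF]
        calc ‖fderiv ℝ (fun x => wθ (x + θ • e x)) q‖ ^ p
            ≤ ((3/2) * ‖fderiv ℝ wθ (q + θ • e q)‖) ^ p :=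
              Real.rpow_le_rpow (norm_nonneg _) hDle hp0
        _ = (3/2 : ℝ) ^ p * ‖fderiv ℝ wθ (q + θ • e q)‖ ^ p :=
              Real.mul_rpow (by norm_num) (norm_nonneg _)
      have hxnn : (0:ℝ) ≤ ‖fderiv ℝ wθ (q + θ • e q)‖ ^ p :=
        Real.rpow_nonneg (norm_nonneg _) p
      have h2 : ‖fderiv ℝ wθ (q + θ • e q)‖ ^ p
          ≤ 2 ^ n * (|(B q).det| * ‖fderiv ℝ wθ (q + θ • e q)‖ ^ p) := by
        have h3 : ((1:ℝ)/2) ^ n * ‖fderiv ℝ wθ (q + θ • e q)‖ ^ p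
            ≤ |(B q).det| * ‖fderiv ℝ wθ (q + θ • e q)‖ ^ p :=
          mul_le_mul_of_nonneg_right hBlo hxnn
        have h4 : (2:ℝ) ^ n * (((1:ℝ)/2) ^ n * ‖fderiv ℝ wθ (q + θ • e q)‖ ^ p)
            = ‖fderiv ℝ wθ (q + θ • e q)‖ ^ p := by
          rw [← mul_assoc, ← mul_pow]
          norm_num
        calc ‖fderiv ℝ wθ (q + θ • e q)‖ ^ p
            = 2 ^ n * (((1:ℝ)/2) ^ n * ‖fderiv ℝ wθ (q + θ • e q)‖ ^ p) := h4.symm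
        _ ≤ 2 ^ n * (|(B q).det| * ‖fderiv ℝ wθ (q + θ • e q)‖ ^ p) := by
            exact mul_le_mul_of_nonneg_left h3 (by positivity)
      calc F q ≤ (3/2 : ℝ) ^ p * ‖fderiv ℝ wθ (q + θ • e q)‖ ^ p := h1
      _ ≤ (3/2 : ℝ) ^ p *
            (2 ^ n * (|(B q).det| * ‖fderiv ℝ wθ (q + θ • e q)‖ ^ p)) :=
            mul_le_mul_of_nonneg_left h2 (by positivity)
      _ = (3/2 : ℝ) ^ p * 2 ^ n *
            (|(B q).det| * ‖fderiv ℝ wθ (q + θ • e q)‖ ^ p) := by ring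
  -- change of variables
  have hCoV : ∫ y in (fun q => q + θ • e q) '' Ω, ‖fderiv ℝ wθ y‖ ^ p
      = ∫ q in Ω, |(B q).det| * ‖fderiv ℝ wθ (q + θ • e q)‖ ^ p := by
    have := integral_image_eq_integral_abs_det_fderiv_smul volume hΩ.measurableSet
      (fun q _ => (hder q).hasFDerivWithinAt) hinj (fun y => ‖fderiv ℝ wθ y‖ ^ p)
    simpa [smul_eq_mul] using this
  -- measurability
  have hYcont : Continuous fun q : EuclideanSpace ℝ (Fin n) => q + θ • e q :=
    continuous_id.add (he.continuous.const_smul θ)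
  have hgmeas : Measurable fun y => ‖fderiv ℝ wθ y‖ ^ p :=
    (Real.continuous_rpow_const hp0).measurable.comp (measurable_fderiv ℝ wθ).norm
  have hFmeas : Measurable F :=
    (Real.continuous_rpow_const hp0).measurable.comp
      (measurable_fderiv ℝ (fun x => wθ (x + θ • e x))).norm
  have hdetcont : Continuous fun q => |(B q).det| := by
    have hBcont : Continuous B :=
      continuous_const.add ((he.continuous_fderiv one_ne_zero).const_smul θ)
    exact (ContinuousLinearMap.continuous_det.comp hBcont).abs
  have hhmeas : Measurable fun q => |(B q).det| * ‖fderiv ℝ wθ (q + θ • e q)‖ ^ p :=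
    hdetcont.measurable.mul (hgmeas.comp hYcont.measurable)
  rw [hCoV]
  by_cases hint : IntegrableOn F Ω volume
  · have hint2 : IntegrableOn (fun q => 2 ^ p * (3/2 : ℝ) ^ n * F q) Ω volume :=
      hint.const_mul _
    have hhint : IntegrableOn
        (fun q => |(B q).det| * ‖fderiv ℝ wθ (q + θ • e q)‖ ^ p) Ω volume := by
      refine hint2.mono' (hhmeas.aestronglyMeasurable.restrict) ?_
      refine (ae_restrict_iff' hΩ.measurableSet).2 (ae_of_all _ fun q hq => ?_)
      rw [Real.norm_eq_abs, abs_of_nonneg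
        (mul_nonneg (abs_nonneg _) (Real.rpow_nonneg (norm_nonneg _) p))]
      exact (key q hq).1
    calc ∫ q in Ω, |(B q).det| * ‖fderiv ℝ wθ (q + θ • e q)‖ ^ p
        ≤ ∫ q in Ω, 2 ^ p * (3/2 : ℝ) ^ n * F q :=
          setIntegral_mono_on hhint hint2 hΩ.measurableSet fun q hq => (key q hq).1
    _ = 2 ^ p * (3/2 : ℝ) ^ n * ∫ q in Ω, F q := MeasureTheory.integral_const_mul _ _
  · have hR : ∫ q in Ω, F q = 0 := integral_undef hint
    have hL : ¬ IntegrableOn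
        (fun q => |(B q).det| * ‖fderiv ℝ wθ (q + θ • e q)‖ ^ p) Ω volume := by
      intro hcon
      apply hint
      refine (hcon.const_mul ((3/2 : ℝ) ^ p * 2 ^ n)).mono'
        (hFmeas.aestronglyMeasurable.restrict) ?_
      refine (ae_restrict_iff' hΩ.measurableSet).2 (ae_of_all _ fun q hq => ?_)
      rw [Real.norm_eq_abs, abs_of_nonneg (Real.rpow_nonneg (norm_nonneg _) p)]
      exact (key q hq).2
    rw [integral_undef hL, hF] at *
    rw [hR, mul_zero]
end

section
/- Let N ≥ 1, T > 0 and c₀, c₁, c₂ ≥ 0. Let A : [0,T] → ℝ^{N×N} be a continuously differentiable family of symmetric matrices with A(t) positive definite for each t ∈ [0,T], and suppose |wᵀ A'(t) z| ≤ c₀ ‖w‖_{A(t)} ‖z‖_{A(t)} for all t ∈ [0,T] and all w, z ∈ ℝᴺ. Let d : [0,T] → ℝ be continuous, and let e : [0,T] → ℝᴺ be continuously differentiable with e(0) = 0 and ‖e'(t)‖²_{A(t)} ≤ c₁ ‖e(t)‖²_{A(t)} + c₂ d(t)² for all t ∈ [0,T]. Then there exists a constant C, depending only on c₀, c₁, c₂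 and T, such that for all t ∈ [0,T]: ‖e(t)‖²_{A(t)} ≤ C ∫₀ᵗ d(s)² ds, and ‖e'(t)‖²_{A(t)} ≤ C ( d(t)² + ∫₀ᵗ d(s)² ds ). -/
open Matrix MeasureTheory

/-- The norm ‖w‖_A = √(wᵀ A w) induced by a (positive semidefinite) matrix A. -/
noncomputable def matNorm {N : ℕ} (A : Matrix (Fin N) (Fin N) ℝ) (w : Fin N → ℝ) : ℝ :=
  Real.sqrt (w ⬝ᵥ A.mulVec w)

lemma psd_nonneg {N : ℕ} {A : Matrix (Fin N) (Fin N) ℝ} (hA : A.PosSemidef) (x : Fin N → ℝ) :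
    0 ≤ x ⬝ᵥ A.mulVec x := by simpa using hA.dotProduct_mulVec_nonneg x

lemma sym_dot {N : ℕ} {A : Matrix (Fin N) (Fin N) ℝ} (hA : A.IsHermitian) (x y : Fin N → ℝ) :
    y ⬝ᵥ A.mulVec x = x ⬝ᵥ A.mulVec y := by
  rw [Matrix.dotProduct_mulVec, ← Matrix.mulVec_transpose]
  have : Aᵀ = A := by rw [← Matrix.conjTranspose_eq_transpose_of_trivial]; exact hA
  rw [this, dotProduct_comm]

lemma matNorm_sq {N : ℕ} {A : Matrix (Fin N) (Fin N) ℝ} (hA : A.PosSemidef) (x : Fin N → ℝ) :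
    matNorm A x ^ 2 = x ⬝ᵥ A.mulVec x := Real.sq_sqrt (psd_nonneg hA x)

lemma matNorm_nonneg {N : ℕ} (A : Matrix (Fin N) (Fin N) ℝ) (x : Fin N → ℝ) :
    0 ≤ matNorm A x := Real.sqrt_nonneg _

/-- Cauchy–Schwarz for a positive semidefinite quadratic form. -/
lemma mat_cs {N : ℕ} {A : Matrix (Fin N) (Fin N) ℝ} (hA : A.PosSemidef) (x y : Fin N → ℝ) :
    x ⬝ᵥ A.mulVec y ≤ matNorm A x * matNorm A y := by
  set a := x ⬝ᵥ A.mulVec x with ha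
  set b := x ⬝ᵥ A.mulVec y with hb
  set c := y ⬝ᵥ A.mulVec y with hc
  have ha0 : 0 ≤ a := psd_nonneg hA x
  have hc0 : 0 ≤ c := psd_nonneg hA y
  have key : ∀ l : ℝ, 0 ≤ c * (l * l) + (2 * b) * l + a := by
    intro l
    have h := psd_nonneg hA (x + l • y)
    have hxy : y ⬝ᵥ A.mulVec x = b := sym_dot hA.1 x y
    have hexp : (x + l • y) ⬝ᵥ A.mulVec (x + l • y) = c * (l * l) + (2 * b) * l + a := by
      simp [Matrix.mulVec_add, Matrix.mulVec_smul, add_dotProduct,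
        smul_dotProduct, dotProduct_add, dotProduct_smul,
        smul_eq_mul, hxy, ← ha, ← hb, ← hc]
      ring
    rw [hexp] at h; exact h
  have hd : discrim c (2*b) a ≤ 0 := discrim_le_zero key
  have hbb : b^2 ≤ a * c := by
    simp only [discrim] at hd; nlinarith
  have : b ≤ Real.sqrt (a*c) := by
    calc b ≤ |b| := le_abs_self b
    _ = Real.sqrt (b^2) := (Real.sqrt_sq_eq_abs b).symm
    _ ≤ Real.sqrt (a*c) := Real.sqrt_le_sqrt hbb
  calc b ≤ Real.sqrt (a*c) := this
  _ = Real.sqrt a * Real.sqrt c := Real.sqrt_mul ha0 c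
  _ = matNorm A x * matNorm A y := rfl

lemma quad_deriv {N : ℕ} (A A' : ℝ → Matrix (Fin N) (Fin N) ℝ) (e e' : ℝ → (Fin N → ℝ))
    (t : ℝ) (hA : ∀ i j, HasDerivAt (fun s => A s i j) (A' t i j) t)
    (he : HasDerivAt e (e' t) t) :
    HasDerivAt (fun s => e s ⬝ᵥ (A s).mulVec (e s))
      (e' t ⬝ᵥ (A t).mulVec (e t) + e t ⬝ᵥ (A' t).mulVec (e t)
        + e t ⬝ᵥ (A t).mulVec (e' t)) t := by
  have hcomp : ∀ i, HasDerivAt (fun s => e s i) (e' t i) t := hasDerivAt_pi.1 he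
  have h : HasDerivAt (fun s => ∑ i, ∑ j, e s i * (A s i j * e s j))
      (∑ i, ∑ j, (e' t i * (A t i j * e t j)
        + e t i * (A' t i j * e t j + A t i j * e' t j))) t := by
    refine HasDerivAt.fun_sum fun i _ => HasDerivAt.fun_sum fun j _ => ?_
    exact (hcomp i).mul ((hA i j).mul (hcomp j))
  have heq : (fun s => ∑ i, ∑ j, e s i * (A s i j * e s j))
      = fun s => e s ⬝ᵥ (A s).mulVec (e s) := by
    funext s; simp [dotProduct, Matrix.mulVec, Finset.mul_sum]
  have hval : (∑ i, ∑ j, (e' t i * (A t i j * e t j)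
        + e t i * (A' t i j * e t j + A t i j * e' t j)))
      = e' t ⬝ᵥ (A t).mulVec (e t) + e t ⬝ᵥ (A' t).mulVec (e t)
        + e t ⬝ᵥ (A t).mulVec (e' t) := by
    simp only [dotProduct, Matrix.mulVec, Finset.mul_sum, ← Finset.sum_add_distrib]
    refine Finset.sum_congr rfl fun i _ => ?_
    refine Finset.sum_congr rfl fun j _ => ?_
    ring
  rw [heq, hval] at h
  exact h

set_option maxHeartbeats 1000000 in
/-- Abstract energy estimate (core of the stability Lemma 6.1): for a C¹ family of
symmetric positive definite matrices A(t) with |wᵀA'(t)z| ≤ c₀‖w‖_{A(t)}‖z‖_{A(t)},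
and a C¹ error e(t) with e(0) = 0 satisfying
‖e'(t)‖²_{A(t)} ≤ c₁‖e(t)‖²_{A(t)} + c₂ d(t)², there is a constant C depending only on
c₀, c₁, c₂, T with ‖e(t)‖²_{A(t)} ≤ C∫₀ᵗ d² and ‖e'(t)‖²_{A(t)} ≤ C(d(t)² + ∫₀ᵗ d²). -/
theorem stmt8 (T c₀ c₁ c₂ : ℝ) (hT : 0 < T) (hc₀ : 0 ≤ c₀) (hc₁ : 0 ≤ c₁) (hc₂ : 0 ≤ c₂) :
    ∃ C : ℝ, ∀ (N : ℕ), 1 ≤ N →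
      ∀ (A A' : ℝ → Matrix (Fin N) (Fin N) ℝ),
        (∀ t ∈ Set.Icc (0:ℝ) T, ∀ i j, HasDerivAt (fun s => A s i j) (A' t i j) t) →
        (∀ i j, ContinuousOn (fun s => A' s i j) (Set.Icc (0:ℝ) T)) →
        (∀ t ∈ Set.Icc (0:ℝ) T, (A t).PosDef) →
        (∀ t ∈ Set.Icc (0:ℝ) T, ∀ w z : Fin N → ℝ,
          |w ⬝ᵥ (A' t).mulVec z| ≤ c₀ * matNorm (A t) w * matNorm (A t) z) →
        ∀ d : ℝ → ℝ, ContinuousOn d (Set.Icc (0:ℝ) T) →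
        ∀ e e' : ℝ → (Fin N → ℝ),
          (∀ t ∈ Set.Icc (0:ℝ) T, HasDerivAt e (e' t) t) →
          ContinuousOn e' (Set.Icc (0:ℝ) T) →
          e 0 = 0 →
          (∀ t ∈ Set.Icc (0:ℝ) T,
            matNorm (A t) (e' t) ^ 2 ≤ c₁ * matNorm (A t) (e t) ^ 2 + c₂ * d t ^ 2) →
          ∀ t ∈ Set.Icc (0:ℝ) T,
            matNorm (A t) (e t) ^ 2 ≤ C * ∫ s in (0:ℝ)..t, d s ^ 2 ∧
            matNorm (A t) (e' t) ^ 2 ≤ C * (d t ^ 2 + ∫ s in (0:ℝ)..t, d s ^ 2) := by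
  set s₁ := Real.sqrt c₁ with hs₁def
  have hs₁0 : 0 ≤ s₁ := Real.sqrt_nonneg _
  have hs₁sq : s₁ ^ 2 = c₁ := Real.sq_sqrt hc₁
  set K := c₀ + 2 * s₁ + 1 with hKdef
  have hK0 : 0 ≤ K := by positivity
  set E := Real.exp (K * T) with hEdef
  have hE1 : 1 ≤ E := Real.one_le_exp (by positivity)
  refine ⟨(c₁ + 1) * (c₂ * E) + c₂, ?_⟩
  intro N hN A A' hAdiff hA'cont hPD hA'bd d hd e e' he he'cont he0 hineq t ht
  have h0T : (0:ℝ) ∈ Set.Icc (0:ℝ) T := ⟨le_refl 0, hT.le⟩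
  -- continuous extension of d to all of ℝ
  set dd : ℝ → ℝ := fun s => d (min T (max 0 s)) with hdddef
  have hmem : ∀ s : ℝ, min T (max 0 s) ∈ Set.Icc (0:ℝ) T := by
    intro s
    constructor
    · exact le_min hT.le (le_max_left _ _)
    · exact min_le_left _ _
  have hddcont : Continuous dd := by
    apply hd.comp_continuous (continuous_const.min (continuous_const.max continuous_id))
    exact hmem
  have hddeq : ∀ s ∈ Set.Icc (0:ℝ) T, dd s = d s := by
    intro s hs
    simp only [hdddef]
    rw [max_eq_right hs.1, min_eq_right hs.2]
  -- the energy φ and its derivative D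
  set φ : ℝ → ℝ := fun s => e s ⬝ᵥ (A s).mulVec (e s) with hφdef
  set D : ℝ → ℝ := fun s => e' s ⬝ᵥ (A s).mulVec (e s) + e s ⬝ᵥ (A' s).mulVec (e s)
    + e s ⬝ᵥ (A s).mulVec (e' s) with hDdef
  have hφdiff : ∀ s ∈ Set.Icc (0:ℝ) T, HasDerivAt φ (D s) s := fun s hs =>
    quad_deriv A A' e e' s (hAdiff s hs) (he s hs)
  -- the key differential inequality
  have hDbd : ∀ s ∈ Set.Icc (0:ℝ) T, D s ≤ K * φ s + c₂ * d s ^ 2 := by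
    intro s hs
    have hPSD := (hPD s hs).posSemidef
    set aN := matNorm (A s) (e s) with haNdef
    set bN := matNorm (A s) (e' s) with hbNdef
    have haN0 : 0 ≤ aN := matNorm_nonneg _ _
    have hbN0 : 0 ≤ bN := matNorm_nonneg _ _
    have h1 : e' s ⬝ᵥ (A s).mulVec (e s) ≤ bN * aN := mat_cs hPSD _ _
    have h3 : e s ⬝ᵥ (A s).mulVec (e' s) ≤ aN * bN := mat_cs hPSD _ _
    have h2 : e s ⬝ᵥ (A' s).mulVec (e s) ≤ c₀ * aN * aN :=
      le_trans (le_abs_self _) (hA'bd s hs _ _)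
    have hφeq : φ s = aN ^ 2 := (matNorm_sq hPSD _).symm
    have hb2 : bN ^ 2 ≤ c₁ * aN ^ 2 + c₂ * d s ^ 2 := hineq s hs
    rw [← hs₁sq] at hb2
    have hd2 : 0 ≤ c₂ * d s ^ 2 := by positivity
    -- 2 aN bN ≤ (2 s₁ + 1) aN² + c₂ d²
    have h2ab : 2 * (aN * bN) ≤ (2 * s₁ + 1) * aN ^ 2 + c₂ * d s ^ 2 := by
      rcases le_total bN (s₁ * aN) with hcase | hcase
      · nlinarith [mul_nonneg haN0 (sub_nonneg.2 hcase)]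
      · nlinarith [sq_nonneg (aN - (bN - s₁ * aN)),
          mul_nonneg (mul_nonneg hs₁0 haN0) (sub_nonneg.2 hcase)]
    simp only [hDdef, hKdef, hφeq]
    nlinarith [h1, h2, h3, h2ab]
  -- the integral term
  set f : ℝ → ℝ := fun u => Real.exp (-K * u) * dd u ^ 2 with hfdef
  have hfcont : Continuous f := by
    apply Continuous.mul
    · exact (continuous_const.mul continuous_id).rexp
    · exact (hddcont.pow 2)
  set F : ℝ → ℝ := fun s => ∫ u in (0:ℝ)..s, f u with hFdef
  have hFderiv : ∀ s : ℝ, HasDerivAt F (f s) s := fun s =>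
    (hfcont.integral_hasStrictDerivAt 0 s).hasDerivAt
  -- the Gronwall function g
  set g : ℝ → ℝ := fun s => Real.exp (-K * s) * φ s - c₂ * F s with hgdef
  have hexpderiv : ∀ s : ℝ, HasDerivAt (fun u => Real.exp (-K * u))
      (Real.exp (-K * s) * (-K * 1)) s := fun s =>
    ((hasDerivAt_id s).const_mul (-K)).exp
  have hgderiv : ∀ s ∈ Set.Icc (0:ℝ) T, HasDerivAt g
      ((Real.exp (-K * s) * (-K * 1) * φ s + Real.exp (-K * s) * D s) - c₂ * f s) s := by
    intro s hs
    exact ((hexpderiv s).mul (hφdiff s hs)).sub ((hFderiv s).const_mul c₂)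
  have hgd_nonpos : ∀ s ∈ Set.Icc (0:ℝ) T,
      (Real.exp (-K * s) * (-K * 1) * φ s + Real.exp (-K * s) * D s) - c₂ * f s ≤ 0 := by
    intro s hs
    have hD := hDbd s hs
    have hdd := hddeq s hs
    have hexp' : (0:ℝ) < Real.exp (-K * s) := Real.exp_pos _
    simp only [hfdef, hdd]
    nlinarith [mul_le_mul_of_nonneg_left hD hexp'.le]
  -- g is antitone on [0, T]
  have hganti : AntitoneOn g (Set.Icc (0:ℝ) T) := by
    apply antitoneOn_of_deriv_nonpos (convex_Icc 0 T)
    · intro s hs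
      exact ((hgderiv s hs).continuousAt).continuousWithinAt
    · intro s hs
      rw [interior_Icc] at hs
      exact ((hgderiv s (Set.mem_Icc_of_Ioo hs)).differentiableAt).differentiableWithinAt
    · intro s hs
      rw [interior_Icc] at hs
      rw [(hgderiv s (Set.mem_Icc_of_Ioo hs)).deriv]
      exact hgd_nonpos s (Set.mem_Icc_of_Ioo hs)
  have hg0 : g 0 = 0 := by
    simp [hgdef, hφdef, hFdef, he0, intervalIntegral.integral_same]
  have hgt : g t ≤ 0 := by
    rw [← hg0]; exact hganti h0T ht ht.1
  -- unwind Gronwall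
  have hFle : F t ≤ ∫ u in (0:ℝ)..t, d u ^ 2 := by
    have heqI : (∫ u in (0:ℝ)..t, dd u ^ 2) = ∫ u in (0:ℝ)..t, d u ^ 2 := by
      apply intervalIntegral.integral_congr
      intro u hu
      rw [Set.uIcc_of_le ht.1] at hu
      show dd u ^ 2 = d u ^ 2
      rw [hddeq u ⟨hu.1, hu.2.trans ht.2⟩]
    rw [← heqI]
    apply intervalIntegral.integral_mono_on ht.1
      (hfcont.intervalIntegrable _ _) ((hddcont.pow 2).intervalIntegrable _ _)
    intro u hu
    simp only [hfdef, Pi.pow_apply]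
    have : Real.exp (-K * u) ≤ 1 := by
      rw [Real.exp_le_one_iff]
      nlinarith [hu.1, hK0]
    nlinarith [sq_nonneg (dd u)]
  have hI0 : 0 ≤ ∫ u in (0:ℝ)..t, d u ^ 2 :=
    intervalIntegral.integral_nonneg ht.1 fun u _ => sq_nonneg _
  have hF0 : 0 ≤ F t :=
    intervalIntegral.integral_nonneg ht.1 fun u _ => by positivity
  have hφb : φ t ≤ c₂ * E * ∫ u in (0:ℝ)..t, d u ^ 2 := by
    have h1 : Real.exp (-K * t) * φ t ≤ c₂ * F t := by
      have h := hgt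
      simp only [hgdef] at h
      linarith
    have hexplt : Real.exp (K * t) ≤ E := by
      rw [hEdef]
      exact Real.exp_le_exp.2 (by nlinarith [ht.1, ht.2, hK0])
    have hexppos : (0:ℝ) < Real.exp (-K * t) := Real.exp_pos _
    have h2 : φ t ≤ Real.exp (K * t) * (c₂ * F t) := by
      have := mul_le_mul_of_nonneg_left h1 (Real.exp_pos (K * t)).le
      rwa [← mul_assoc, ← Real.exp_add, (by ring : K * t + -K * t = 0), Real.exp_zero,
        one_mul] at this
    calc φ t ≤ Real.exp (K * t) * (c₂ * F t) := h2
      _ ≤ E * (c₂ * F t) := by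
          apply mul_le_mul_of_nonneg_right hexplt (by positivity)
      _ ≤ E * (c₂ * ∫ u in (0:ℝ)..t, d u ^ 2) := by
          apply mul_le_mul_of_nonneg_left _ (by positivity : (0:ℝ) ≤ E)
          exact mul_le_mul_of_nonneg_left hFle hc₂
      _ = c₂ * E * ∫ u in (0:ℝ)..t, d u ^ 2 := by ring
  have hPSDt := (hPD t ht).posSemidef
  have hmne : matNorm (A t) (e t) ^ 2 = φ t := matNorm_sq hPSDt _
  constructor
  · rw [hmne]
    calc φ t ≤ c₂ * E * ∫ u in (0:ℝ)..t, d u ^ 2 := hφb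
      _ ≤ ((c₁ + 1) * (c₂ * E) + c₂) * ∫ u in (0:ℝ)..t, d u ^ 2 := by
          apply mul_le_mul_of_nonneg_right _ hI0
          nlinarith [mul_nonneg hc₂ (le_trans zero_le_one hE1)]
  · have hb := hineq t ht
    rw [hmne] at hb
    have hEpos : (0:ℝ) < E := lt_of_lt_of_le one_pos hE1
    nlinarith [hb, mul_le_mul_of_nonneg_left hφb hc₁,
      mul_nonneg (mul_nonneg hc₂ hEpos.le) hI0,
      mul_nonneg hc₂ hI0,
      mul_nonneg (mul_nonneg hc₂ hEpos.le) (sq_nonneg (d t)),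
      mul_nonneg (mul_nonneg (mul_nonneg hc₁ hc₂) hEpos.le) (sq_nonneg (d t))]
end

section
/- Let n ≥ 1, let Ω ⊆ ℝⁿ be a bounded open set, let e : ℝⁿ → ℝⁿ be continuously differentiable with operator norm ‖De(p)‖ ≤ 1/2 for all p ∈ Ω, and let w, z : Ω → ℝ be measurable functions such that the product w·z is Lebesgue integrable on Ω. Then ∫_Ω w(p) z(p) det(Iₙ + De(p)) dp − ∫_Ω w(p) z(p) dp = ∫₀¹ ( ∫_Ω w(p) z(p) · tr( De(p) (Iₙ + θ De(p))⁻¹ ) · det(Iₙ + θ De(p)) dp ) dθ. -/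
open MeasureTheory Polynomial Matrix


section MatrixLemmas

variable {n : ℕ}

lemma det_one_add_smul_eval (M : Matrix (Fin n) (Fin n) ℝ) (t : ℝ) :
    (1 + t • M).det = ((1 + (X : ℝ[X]) • M.map C).det).eval t := by
  rw [← Polynomial.coe_evalRingHom, RingHom.map_det]
  congr 1
  ext i j
  simp [Matrix.map_apply, Matrix.one_apply, Matrix.add_apply, Matrix.smul_apply, apply_ite]
  ring

lemma hasDerivAt_det_one_add_smul_zero (M : Matrix (Fin n) (Fin n) ℝ) :
    HasDerivAt (fun t : ℝ => (1 + t • M).det) M.trace 0 := by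
  have hfun : (fun t : ℝ => (1 + t • M).det)
      = fun t => ((1 + (X : ℝ[X]) • M.map C).det).eval t := funext (det_one_add_smul_eval M)
  rw [hfun]
  have h := (1 + (X : ℝ[X]) • M.map C).det.hasDerivAt (0 : ℝ)
  rwa [Matrix.derivative_det_one_add_X_smul M] at h

lemma hasDerivAt_det_one_add_smul (M : Matrix (Fin n) (Fin n) ℝ) (t : ℝ)
    (h : IsUnit (1 + t • M)) :
    HasDerivAt (fun s : ℝ => (1 + s • M).det) ((M * (1 + t • M).adjugate).trace) t := by
  set A : Matrix (Fin n) (Fin n) ℝ := 1 + t • M with hA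
  have hdet : IsUnit A.det := (Matrix.isUnit_iff_isUnit_det A).1 h
  set B : Matrix (Fin n) (Fin n) ℝ := A⁻¹ * M with hB
  have hAB : A * B = M := Matrix.mul_nonsing_inv_cancel_left A M hdet
  have key : ∀ s : ℝ, 1 + s • M = A * (1 + (s - t) • B) := by
    intro s
    rw [Matrix.mul_add, mul_one, Matrix.mul_smul, hAB, hA]
    rw [sub_smul]
    abel
  have h1 : HasDerivAt (fun s : ℝ => (1 + (s - t) • B).det) B.trace t := by
    have hin : HasDerivAt (fun s : ℝ => s - t) 1 t := (hasDerivAt_id t).sub_const t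
    have h0 := hasDerivAt_det_one_add_smul_zero B
    have := HasDerivAt.scomp (𝕜 := ℝ) t (by simpa using h0) hin
    simp only [one_smul] at this
    exact this
  have h2 : HasDerivAt (fun s : ℝ => A.det * (1 + (s - t) • B).det) (A.det * B.trace) t :=
    h1.const_mul A.det
  have hfun : (fun s : ℝ => (1 + s • M).det) = fun s => A.det * (1 + (s - t) • B).det := by
    funext s
    rw [key s, Matrix.det_mul]
  rw [hfun]
  convert h2 using 1
  rw [hB, Matrix.trace_mul_comm, Matrix.inv_def]
  rw [Matrix.smul_mul, Matrix.trace_smul, smul_eq_mul, ← mul_assoc,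
    Ring.mul_inverse_cancel _ hdet, one_mul]

lemma integral_trace_adjugate (M : Matrix (Fin n) (Fin n) ℝ)
    (h : ∀ t ∈ Set.Icc (0:ℝ) 1, IsUnit (1 + t • M)) :
    ∫ t in (0:ℝ)..1, (M * (1 + t • M).adjugate).trace = (1 + M).det - 1 := by
  have hcont : Continuous fun t : ℝ => (M * (1 + t • M).adjugate).trace :=
    Continuous.matrix_trace (Continuous.matrix_mul continuous_const
      ((continuous_const.add (continuous_id.smul continuous_const)).matrix_adjugate))
  have := intervalIntegral.integral_eq_sub_of_hasDerivAt
    (f := fun s : ℝ => (1 + s • M).det)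
    (f' := fun s : ℝ => (M * (1 + s • M).adjugate).trace)
    (fun t ht => hasDerivAt_det_one_add_smul M t
      (h t (by rwa [Set.uIcc_of_le zero_le_one] at ht)))
    (hcont.intervalIntegrable 0 1)
  simpa using this

lemma trace_mul_inv_mul_det (A C : Matrix (Fin n) (Fin n) ℝ) (h : IsUnit C.det) :
    (A * C⁻¹).trace * C.det = (A * C.adjugate).trace := by
  rw [Matrix.inv_def, Matrix.mul_smul, Matrix.trace_smul, smul_eq_mul, mul_comm, ← mul_assoc,
    Ring.mul_inverse_cancel _ h, one_mul]

end MatrixLemmas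

lemma ringHom_map_ringInverse {R S : Type*} [Ring R] [Ring S] (f : R →+* S) {x : R}
    (hx : IsUnit x) : f (Ring.inverse x) = Ring.inverse (f x) := by
  obtain ⟨u, rfl⟩ := hx
  rw [Ring.inverse_unit]
  have h1 : f ↑u⁻¹ = ↑((Units.map (f : R →* S)) u)⁻¹ := (Units.coe_map_inv (f : R →* S) u).symm
  rw [h1, ← Ring.inverse_unit ((Units.map (f : R →* S)) u), Units.coe_map]
  rfl

section Bridge

variable {n : ℕ}

/-- The matrix of a continuous linear endomorphism of Euclidean space, as a ring hom. -/
noncomputable def clmMat (n : ℕ) :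
    ((EuclideanSpace ℝ (Fin n)) →L[ℝ] (EuclideanSpace ℝ (Fin n))) →+* Matrix (Fin n) (Fin n) ℝ where
  toFun L := LinearMap.toMatrix (EuclideanSpace.basisFun (Fin n) ℝ).toBasis
    (EuclideanSpace.basisFun (Fin n) ℝ).toBasis L.toLinearMap
  map_one' := by
    show LinearMap.toMatrix _ _ (ContinuousLinearMap.id ℝ _).toLinearMap = 1
    rw [ContinuousLinearMap.coe_id, LinearMap.toMatrix_id]
  map_mul' f g := by
    rw [← LinearMap.toMatrix_comp _ (EuclideanSpace.basisFun (Fin n) ℝ).toBasis]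
    rfl
  map_zero' := by simp
  map_add' f g := by simp

lemma clmMat_smul (θ : ℝ) (L : (EuclideanSpace ℝ (Fin n)) →L[ℝ] (EuclideanSpace ℝ (Fin n))) :
    clmMat n (θ • L) = θ • clmMat n L := by
  simp [clmMat]

lemma clmMat_det (L : (EuclideanSpace ℝ (Fin n)) →L[ℝ] (EuclideanSpace ℝ (Fin n))) :
    L.det = (clmMat n L).det := by
  simp [clmMat, ContinuousLinearMap.det, LinearMap.det_toMatrix]

lemma clmMat_trace (L : (EuclideanSpace ℝ (Fin n)) →L[ℝ] (EuclideanSpace ℝ (Fin n))) :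
    LinearMap.trace ℝ (EuclideanSpace ℝ (Fin n)) L.toLinearMap = (clmMat n L).trace := by
  simp only [clmMat, RingHom.coe_mk, MonoidHom.coe_mk, OneHom.coe_mk]
  exact LinearMap.trace_eq_matrix_trace ℝ (EuclideanSpace.basisFun (Fin n) ℝ).toBasis _

lemma clmMat_continuous : Continuous (clmMat n) := by
  have : (clmMat n : ((EuclideanSpace ℝ (Fin n)) →L[ℝ] _) → _)
      = fun L => ((LinearMap.toMatrix (EuclideanSpace.basisFun (Fin n) ℝ).toBasis
          (EuclideanSpace.basisFun (Fin n) ℝ).toBasis).toLinearMap.comp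
          (ContinuousLinearMap.coeLM ℝ)) L := rfl
  rw [this]
  exact LinearMap.continuous_of_finiteDimensional _

lemma isUnit_one_add_smul (L : EuclideanSpace ℝ (Fin n) →L[ℝ] EuclideanSpace ℝ (Fin n))
    (hL : ‖L‖ ≤ 1 / 2) (θ : ℝ) (hθ : θ ∈ Set.Icc (0:ℝ) 1) : IsUnit (1 + θ • L) := by
  have hnorm : ‖-(θ • L)‖ < 1 := by
    rw [norm_neg]
    calc ‖θ • L‖ = ‖θ‖ * ‖L‖ := norm_smul θ L
      _ ≤ 1 * (1 / 2) := by
          apply mul_le_mul _ hL (norm_nonneg _) zero_le_one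
          rw [Real.norm_eq_abs, abs_le]
          constructor <;> linarith [hθ.1, hθ.2]
      _ < 1 := by norm_num
  refine ⟨Units.oneSub (-(θ • L)) hnorm, ?_⟩
  rw [Units.val_oneSub, sub_neg_eq_add]

lemma clmMat_one_add_smul (θ : ℝ) (L : EuclideanSpace ℝ (Fin n) →L[ℝ] EuclideanSpace ℝ (Fin n)) :
    clmMat n (1 + θ • L) = 1 + θ • clmMat n L := by
  rw [_root_.map_add, _root_.map_one, clmMat_smul]

lemma clm_trace_det_eq (L : EuclideanSpace ℝ (Fin n) →L[ℝ] EuclideanSpace ℝ (Fin n))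
    (hL : ‖L‖ ≤ 1 / 2) (θ : ℝ) (hθ : θ ∈ Set.Icc (0:ℝ) 1) :
    LinearMap.trace ℝ (EuclideanSpace ℝ (Fin n)) ((L.comp (Ring.inverse (1 + θ • L))).toLinearMap)
        * (1 + θ • L).det
      = ((clmMat n L) * (1 + θ • clmMat n L).adjugate).trace := by
  set A := clmMat n L with hA
  have hU := isUnit_one_add_smul L hL θ hθ
  have hmap : clmMat n (1 + θ • L) = 1 + θ • A := clmMat_one_add_smul θ L
  have hUA : IsUnit (1 + θ • A) := hmap ▸ hU.map (clmMat n)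
  have hdetA : IsUnit (1 + θ • A).det := (Matrix.isUnit_iff_isUnit_det _).1 hUA
  have hcomp : clmMat n (L.comp (Ring.inverse (1 + θ • L))) = A * (1 + θ • A)⁻¹ := by
    have h0 : L.comp (Ring.inverse (1 + θ • L)) = L * (Ring.inverse (1 + θ • L)) := rfl
    rw [h0, _root_.map_mul, ringHom_map_ringInverse _ hU, hmap, Matrix.nonsing_inv_eq_ringInverse]
  rw [clmMat_trace, hcomp, clmMat_det (1 + θ • L), hmap]
  exact trace_mul_inv_mul_det A (1 + θ • A) hdetA

end Bridge

/-- Pullback form of the mass-matrix difference identity (Lemma 5.1, first identity):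
∫_Ω wz·det(I + De) − ∫_Ω wz = ∫₀¹ ∫_Ω wz · tr(De(I + θDe)⁻¹) · det(I + θDe) dp dθ. -/
theorem stmt13 (n : ℕ) (hn : 1 ≤ n)
    (Ω : Set (EuclideanSpace ℝ (Fin n))) (hΩo : IsOpen Ω) (hΩb : Bornology.IsBounded Ω)
    (e : EuclideanSpace ℝ (Fin n) → EuclideanSpace ℝ (Fin n)) (he : ContDiff ℝ 1 e)
    (hbound : ∀ p ∈ Ω, ‖fderiv ℝ e p‖ ≤ 1 / 2)
    (w z : EuclideanSpace ℝ (Fin n) → ℝ) (hw : Measurable w) (hz : Measurable z)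
    (hint : IntegrableOn (fun p => w p * z p) Ω) :
    (∫ p in Ω, w p * z p * (1 + fderiv ℝ e p).det) - ∫ p in Ω, w p * z p
      = ∫ θ in (0:ℝ)..1, ∫ p in Ω,
          w p * z p
            * LinearMap.trace ℝ (EuclideanSpace ℝ (Fin n))
                ((fderiv ℝ e p).comp (Ring.inverse (1 + θ • fderiv ℝ e p))).toLinearMap
            * (1 + θ • fderiv ℝ e p).det := by
  have hLcont : Continuous fun p => fderiv ℝ e p := he.continuous_fderiv one_ne_zero
  set A : EuclideanSpace ℝ (Fin n) → Matrix (Fin n) (Fin n) ℝ :=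
    fun p => clmMat n (fderiv ℝ e p) with hAdef
  have hAcont : Continuous A := clmMat_continuous.comp hLcont
  set g : ℝ × EuclideanSpace ℝ (Fin n) → ℝ :=
    fun q => ((A q.2) * (1 + q.1 • A q.2).adjugate).trace with hgdef
  have hgcont : Continuous g :=
    Continuous.matrix_trace ((hAcont.comp continuous_snd).matrix_mul
      ((continuous_const.add (continuous_fst.smul (hAcont.comp continuous_snd))).matrix_adjugate))
  have hKcpt : IsCompact ((Set.Icc (0:ℝ) 1) ×ˢ closure Ω) :=
    isCompact_Icc.prod hΩb.isCompact_closure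
  obtain ⟨C, hC⟩ := hKcpt.exists_bound_of_continuousOn hgcont.continuousOn
  set C' : ℝ := max C 0 with hC'def
  have hC' : ∀ θ ∈ Set.Icc (0:ℝ) 1, ∀ p ∈ Ω, ‖g (θ, p)‖ ≤ C' := by
    intro θ hθ p hp
    exact le_trans (hC (θ, p) ⟨hθ, subset_closure hp⟩) (le_max_left _ _)
  have hwz_meas : Measurable fun p => w p * z p := hw.mul hz
  -- per-θ integrability on Ω
  have hθint : ∀ θ ∈ Set.Icc (0:ℝ) 1,
      Integrable (fun p => w p * z p * g (θ, p)) (volume.restrict Ω) := by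
    intro θ hθ
    refine Integrable.mono' (hint.norm.const_mul C')
      ((hwz_meas.mul
        (hgcont.comp (continuous_const.prodMk continuous_id)).measurable).aestronglyMeasurable)
      ?_
    filter_upwards [ae_restrict_mem hΩo.measurableSet] with p hp
    rw [norm_mul]
    calc ‖w p * z p‖ * ‖g (θ, p)‖ ≤ ‖w p * z p‖ * C' :=
          mul_le_mul_of_nonneg_left (hC' θ hθ p hp) (norm_nonneg _)
      _ = C' * ‖w p * z p‖ := mul_comm _ _
  -- integrability on the product
  haveI : IsFiniteMeasure (volume.restrict (Set.Ioc (0:ℝ) 1)) := by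
    constructor
    rw [Measure.restrict_apply_univ]
    simp [Real.volume_Ioc]
  have hFmeas : AEStronglyMeasurable (fun q : ℝ × EuclideanSpace ℝ (Fin n) =>
      w q.2 * z q.2 * g q)
      ((volume.restrict (Set.Ioc (0:ℝ) 1)).prod (volume.restrict Ω)) :=
    (((hw.comp measurable_snd).mul (hz.comp measurable_snd)).mul
      hgcont.measurable).aestronglyMeasurable
  have hFint : Integrable (fun q : ℝ × EuclideanSpace ℝ (Fin n) => w q.2 * z q.2 * g q)
      ((volume.restrict (Set.Ioc (0:ℝ) 1)).prod (volume.restrict Ω)) := by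
    rw [MeasureTheory.integrable_prod_iff hFmeas]
    constructor
    · filter_upwards [ae_restrict_mem measurableSet_Ioc] with θ hθ
      exact hθint θ (Set.Ioc_subset_Icc_self hθ)
    · refine Integrable.mono'
        (integrable_const (C' * ∫ p in Ω, ‖w p * z p‖))
        (hFmeas.norm.integral_prod_right') ?_
      filter_upwards [ae_restrict_mem measurableSet_Ioc] with θ hθ
      have h1 : Integrable (fun p => ‖w p * z p * g (θ, p)‖) (volume.restrict Ω) :=
        (hθint θ (Set.Ioc_subset_Icc_self hθ)).norm
      rw [Real.norm_of_nonneg (integral_nonneg fun p => norm_nonneg _)]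
      calc (∫ p in Ω, ‖w p * z p * g (θ, p)‖)
          ≤ ∫ p in Ω, C' * ‖w p * z p‖ := by
            refine integral_mono_ae h1 (hint.norm.const_mul C') ?_
            filter_upwards [ae_restrict_mem hΩo.measurableSet] with p hp
            rw [norm_mul]
            calc ‖w p * z p‖ * ‖g (θ, p)‖ ≤ ‖w p * z p‖ * C' :=
                  mul_le_mul_of_nonneg_left (hC' θ (Set.Ioc_subset_Icc_self hθ) p hp)
                    (norm_nonneg _)
              _ = C' * ‖w p * z p‖ := mul_comm _ _
        _ = C' * ∫ p in Ω, ‖w p * z p‖ := MeasureTheory.integral_const_mul _ _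
  -- rewrite RHS integrand using the trace/adjugate identity
  have hcongr1 : (∫ θ in (0:ℝ)..1, ∫ p in Ω,
          w p * z p
            * LinearMap.trace ℝ (EuclideanSpace ℝ (Fin n))
                ((fderiv ℝ e p).comp (Ring.inverse (1 + θ • fderiv ℝ e p))).toLinearMap
            * (1 + θ • fderiv ℝ e p).det)
      = ∫ θ in (0:ℝ)..1, ∫ p in Ω, w p * z p * g (θ, p) := by
    apply intervalIntegral.integral_congr
    intro θ hθ
    rw [Set.uIcc_of_le zero_le_one] at hθ
    apply setIntegral_congr_fun hΩo.measurableSet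
    intro p hp
    have hkey := clm_trace_det_eq (fderiv ℝ e p) (hbound p hp) θ hθ
    dsimp only
    rw [mul_assoc, hkey]
  -- Fubini
  have hswap : (∫ θ in (0:ℝ)..1, ∫ p in Ω, w p * z p * g (θ, p))
      = ∫ p in Ω, ∫ θ in Set.Ioc (0:ℝ) 1, w p * z p * g (θ, p) := by
    rw [intervalIntegral.integral_of_le zero_le_one]
    exact MeasureTheory.integral_integral_swap hFint
  -- pointwise FTC in p
  have hinner : ∀ p ∈ Ω, (∫ θ in Set.Ioc (0:ℝ) 1, w p * z p * g (θ, p))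
      = w p * z p * ((1 + A p).det - 1) := by
    intro p hp
    have hunits : ∀ t ∈ Set.Icc (0:ℝ) 1, IsUnit (1 + t • A p) := by
      intro t ht
      have hU := isUnit_one_add_smul (fderiv ℝ e p) (hbound p hp) t ht
      exact (clmMat_one_add_smul t (fderiv ℝ e p)) ▸ hU.map (clmMat n)
    rw [← intervalIntegral.integral_of_le zero_le_one]
    rw [intervalIntegral.integral_const_mul]
    rw [integral_trace_adjugate (A p) hunits]
  have hstep : (∫ p in Ω, ∫ θ in Set.Ioc (0:ℝ) 1, w p * z p * g (θ, p))
      = ∫ p in Ω, w p * z p * ((1 + A p).det - 1) :=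
    setIntegral_congr_fun hΩo.measurableSet hinner
  -- integrability of w z det(1+A)
  have hdet_cont : Continuous fun p => (1 + A p).det :=
    (continuous_const.add hAcont).matrix_det
  obtain ⟨D, hD⟩ := hΩb.isCompact_closure.exists_bound_of_continuousOn hdet_cont.continuousOn
  have hint2 : IntegrableOn (fun p => w p * z p * (1 + A p).det) Ω := by
    refine Integrable.mono' (hint.norm.const_mul (max D 0))
      ((hwz_meas.mul hdet_cont.measurable).aestronglyMeasurable) ?_
    filter_upwards [ae_restrict_mem hΩo.measurableSet] with p hp
    rw [norm_mul]
    calc ‖w p * z p‖ * ‖(1 + A p).det‖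
        ≤ ‖w p * z p‖ * max D 0 := mul_le_mul_of_nonneg_left
            (le_trans (hD p (subset_closure hp)) (le_max_left _ _)) (norm_nonneg _)
      _ = max D 0 * ‖w p * z p‖ := mul_comm _ _
  have hsplit : (∫ p in Ω, w p * z p * ((1 + A p).det - 1))
      = (∫ p in Ω, w p * z p * (1 + A p).det) - ∫ p in Ω, w p * z p := by
    rw [← MeasureTheory.integral_sub hint2 hint]
    apply setIntegral_congr_fun hΩo.measurableSet
    intro p _
    ring
  have hLHS : (∫ p in Ω, w p * z p * (1 + fderiv ℝ e p).det)
      = ∫ p in Ω, w p * z p * (1 + A p).det := by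
    apply setIntegral_congr_fun hΩo.measurableSet
    intro p _
    dsimp only
    rw [clmMat_det (1 + fderiv ℝ e p), _root_.map_add, _root_.map_one]
  rw [hLHS, ← hsplit, ← hstep, ← hswap, ← hcongr1]
end
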